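/- For every γ ∈ ℂ there exists a linear isometric equivalence D of ℓ²(ℕ, ℂ) onto itself (a displacement operator with parameter γ) such that D(coh β) = exp((γ·conj(β) − conj(γ)·β)/2) • coh(γ + β) for every β ∈ ℂ. -/

import Mathlib

open scoped ComplexConjugate ENNReal InnerProductSpace

/-- The components of the coherent state `|α⟩`: `exp(−|α|²/2)·αⁿ/√(n!)`. -/
noncomputable def cohFun (α : ℂ) : ℕ → ℂ := fun n =>
  (Real.exp (-‖α‖ ^ 2 / 2) / Real.sqrt (Nat.factorial n) : ℝ) * α ^ n

lemma cohFun_memℓp (α : ℂ) : Memℓp (cohFun α) 2 := by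
  apply memℓp_gen
  have h : Summable (fun n : ℕ =>
      Real.exp (-‖α‖ ^ 2 / 2) ^ 2 * ((‖α‖ ^ 2) ^ n / (Nat.factorial n))) :=
    (Real.summable_pow_div_factorial (‖α‖ ^ 2)).mul_left _
  refine h.congr fun n => ?_
  have h2 : ((2 : ℝ≥0∞).toReal) = (2 : ℝ) := by norm_num
  rw [h2, Real.rpow_two]
  have hn : ‖cohFun α n‖ = Real.exp (-‖α‖ ^ 2 / 2) / Real.sqrt (Nat.factorial n) * ‖α‖ ^ n := by
    simp only [cohFun, norm_mul, norm_pow, Complex.norm_real, Real.norm_eq_abs]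
    rw [abs_of_pos (by positivity)]
  rw [hn, mul_pow, div_pow, Real.sq_sqrt (by positivity), pow_right_comm]
  ring

/-- The coherent state `|α⟩` as an element of `ℓ²(ℕ, ℂ)`. -/
noncomputable def coh (α : ℂ) : lp (fun _ : ℕ => ℂ) 2 := ⟨cohFun α, cohFun_memℓp α⟩


lemma inner_coh (α β : ℂ) :
    ⟪coh α, coh β⟫_ℂ = Complex.exp (conj α * β - (‖α‖ ^ 2 : ℝ) / 2 - (‖β‖ ^ 2 : ℝ) / 2) := by
  rw [lp.inner_eq_tsum]
  have hc : ∀ n : ℕ, ⟪coh α n, coh β n⟫_ℂ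
      = Complex.exp (-(‖α‖ ^ 2 : ℝ) / 2) * Complex.exp (-(‖β‖ ^ 2 : ℝ) / 2)
        * ((conj α * β) ^ n / (Nat.factorial n)) := by
    intro n
    have : (coh α) n = cohFun α n := rfl
    rw [RCLike.inner_apply]
    show cohFun β n * conj (cohFun α n) = _
    simp only [cohFun, map_mul, map_pow, Complex.conj_ofReal, ← Complex.ofReal_exp]
    push_cast
    rw [mul_pow]
    have hn : (Real.sqrt (Nat.factorial n) : ℂ) * (Real.sqrt (Nat.factorial n) : ℂ)
        = (Nat.factorial n : ℂ) := by
      rw [← Complex.ofReal_mul, Real.mul_self_sqrt (by positivity)]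
      push_cast; ring
    field_simp
    ring_nf
    rw [← hn]
    ring
  rw [tsum_congr hc, tsum_mul_left]
  have hexp : ∑' n : ℕ, ((conj α * β) ^ n / (Nat.factorial n) : ℂ) = Complex.exp (conj α * β) := by
    rw [Complex.exp_eq_exp_ℂ, NormedSpace.exp_eq_tsum_div]
  rw [hexp, ← Complex.exp_add, ← Complex.exp_add]
  push_cast
  ring_nf

noncomputable def phase (γ β : ℂ) : ℂ := Complex.exp ((γ * conj β - conj γ * β) / 2)

noncomputable def wvec (γ β : ℂ) : lp (fun _ : ℕ => ℂ) 2 := phase γ β • coh (γ + β)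

lemma inner_wvec (γ α β : ℂ) : ⟪wvec γ α, wvec γ β⟫_ℂ = ⟪coh α, coh β⟫_ℂ := by
  rw [wvec, wvec, inner_smul_left, inner_smul_right, inner_coh, inner_coh, phase, phase,
    ← Complex.exp_conj, ← Complex.exp_add, ← Complex.exp_add]
  congr 1
  have h : ∀ z : ℂ, ((‖z‖ ^ 2 : ℝ) : ℂ) = z * conj z := by
    intro z; rw [RCLike.mul_conj]; norm_cast
  simp only [h, map_add, map_mul, map_sub, map_div₀, Complex.conj_conj, map_ofNat]
  ring

open ContinuousMultilinearMap in
lemma coeffs_eq_zero (a : ℕ → ℂ)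
    (hs : ∀ r : NNReal, Summable fun n : ℕ => ‖a n‖ * (r : ℝ) ^ n)
    (hz : ∀ z : ℂ, HasSum (fun n : ℕ => a n * z ^ n) 0) : ∀ n, a n = 0 := by
  set q : FormalMultilinearSeries ℂ ℂ ℂ := fun n => ContinuousMultilinearMap.mkPiRing ℂ (Fin n) (a n) with hq
  have hqn : ∀ n, ‖q n‖ = ‖a n‖ := fun n => ContinuousMultilinearMap.norm_mkPiRing (a n)
  have hrad : q.radius = ⊤ := by
    apply FormalMultilinearSeries.radius_eq_top_of_summable_norm
    intro r
    exact (hs r).congr fun n => by rw [hqn]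
  have hsum : q.sum = 0 := by
    funext z
    show q.sum z = 0
    rw [FormalMultilinearSeries.sum]
    have : ∀ n : ℕ, (q n fun _ => z) = a n * z ^ n := by
      intro n
      rw [hq]
      simp [ContinuousMultilinearMap.mkPiRing_apply, smul_eq_mul]
      ring
    rw [tsum_congr this, (hz z).tsum_eq]
  have h0 : HasFPowerSeriesAt 0 q 0 := by
    have := (q.hasFPowerSeriesOnBall (by rw [hrad]; exact ENNReal.zero_lt_top)).hasFPowerSeriesAt
    rwa [hsum] at this
  intro n
  have := h0.apply_eq_zero n 1
  simpa [hq, ContinuousMultilinearMap.mkPiRing_apply] using this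

lemma summable_pow_div_sqrt_factorial {r : ℝ} (hr : 0 ≤ r) :
    Summable fun n : ℕ => r ^ n / Real.sqrt (Nat.factorial n) := by
  have h1 : Summable fun n : ℕ => (2 * r ^ 2) ^ n / (Nat.factorial n) + (1 / 2 : ℝ) ^ n :=
    (Real.summable_pow_div_factorial _).add
      (summable_geometric_of_lt_one (by norm_num) (by norm_num))
  refine Summable.of_nonneg_of_le (fun n => by positivity) (fun n => ?_) h1
  have hA : (0 : ℝ) ≤ (2 * r ^ 2) ^ n / (Nat.factorial n) := by positivity
  have hB : (0 : ℝ) ≤ (1 / 2 : ℝ) ^ n := by positivity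
  have h2 : r ^ n / Real.sqrt (Nat.factorial n)
      = Real.sqrt ((2 * r ^ 2) ^ n / (Nat.factorial n)) * Real.sqrt ((1 / 2 : ℝ) ^ n) := by
    rw [← Real.sqrt_mul hA]
    have h3 : (2 * r ^ 2) ^ n / (Nat.factorial n) * (1 / 2 : ℝ) ^ n
        = (r ^ n) ^ 2 / (Nat.factorial n) := by
      field_simp
      rw [← mul_pow, ← pow_mul, mul_comm n 2, pow_mul]; congr 1; ring
    rw [h3, Real.sqrt_div (sq_nonneg _), Real.sqrt_sq (pow_nonneg hr n)]
  rw [h2]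
  nlinarith [Real.sq_sqrt hA, Real.sq_sqrt hB, Real.sqrt_nonneg ((2 * r ^ 2) ^ n / (Nat.factorial n)),
    Real.sqrt_nonneg ((1 / 2 : ℝ) ^ n),
    sq_nonneg (Real.sqrt ((2 * r ^ 2) ^ n / (Nat.factorial n)) - Real.sqrt ((1 / 2 : ℝ) ^ n))]

lemma dense_span_coh : (Submodule.span ℂ (Set.range coh)).topologicalClosure = ⊤ := by
  rw [Submodule.topologicalClosure_eq_top_iff, Submodule.eq_bot_iff]
  intro x hx
  have horth : ∀ δ : ℂ, ⟪coh δ, x⟫_ℂ = 0 := fun δ =>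
    (Submodule.mem_orthogonal _ x).mp hx _ (Submodule.subset_span ⟨δ, rfl⟩)
  set a : ℕ → ℂ := fun n => ((Real.sqrt (Nat.factorial n) : ℝ) : ℂ)⁻¹ * x n with ha
  have hanorm : ∀ n, ‖a n‖ ≤ ‖x‖ * (Real.sqrt (Nat.factorial n))⁻¹ := by
    intro n
    rw [ha]
    simp only [norm_mul, norm_inv, Complex.norm_real, Real.norm_eq_abs,
      abs_of_nonneg (Real.sqrt_nonneg _)]
    rw [mul_comm]
    gcongr
    exact lp.norm_apply_le_norm (by norm_num) x n
  have hs : ∀ r : NNReal, Summable fun n : ℕ => ‖a n‖ * (r : ℝ) ^ n := by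
    intro r
    have h1 : Summable fun n : ℕ => ‖x‖ * ((r : ℝ) ^ n / Real.sqrt (Nat.factorial n)) :=
      (summable_pow_div_sqrt_factorial r.coe_nonneg).mul_left _
    refine Summable.of_nonneg_of_le (fun n => by positivity) (fun n => ?_) h1
    rw [div_eq_mul_inv, mul_comm ((r : ℝ) ^ n), ← mul_assoc]
    exact mul_le_mul_of_nonneg_right (hanorm n) (by positivity)
  have hz : ∀ z : ℂ, HasSum (fun n : ℕ => a n * z ^ n) 0 := by
    intro z
    have hsummable : Summable fun n : ℕ => a n * z ^ n := by
      apply Summable.of_norm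
      refine ((hs ‖z‖₊).congr fun n => ?_)
      simp [norm_mul, norm_pow]
    have h0 : ⟪coh (conj z), x⟫_ℂ = 0 := horth _
    rw [lp.inner_eq_tsum] at h0
    have hterm : ∀ n : ℕ, ⟪(coh (conj z)) n, x n⟫_ℂ
        = ((Real.exp (-‖conj z‖ ^ 2 / 2) : ℝ) : ℂ) * (a n * z ^ n) := by
      intro n
      rw [RCLike.inner_apply]
      show (x n) * conj (cohFun (conj z) n) = _
      simp only [cohFun, map_mul, map_pow, Complex.conj_conj, Complex.conj_ofReal, ha]
      push_cast
      ring
    rw [tsum_congr hterm, tsum_mul_left] at h0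
    have hne : ((Real.exp (-‖conj z‖ ^ 2 / 2) : ℝ) : ℂ) ≠ 0 :=
      Complex.ofReal_ne_zero.mpr (Real.exp_ne_zero _)
    have := (mul_eq_zero.mp h0).resolve_left hne
    exact this ▸ hsummable.hasSum
  have hcoeff := coeffs_eq_zero a hs hz
  have hxn : ∀ n : ℕ, (x : ∀ _ : ℕ, ℂ) n = 0 := by
    intro n
    have h1 := hcoeff n
    rw [ha] at h1
    simp only [mul_eq_zero, inv_eq_zero, Complex.ofReal_eq_zero] at h1
    refine h1.resolve_left ?_
    positivity
  exact lp.ext (funext hxn)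

lemma inner_lc (v w : ℂ → lp (fun _ : ℕ => ℂ) 2)
    (h : ∀ a b : ℂ, ⟪w a, w b⟫_ℂ = ⟪v a, v b⟫_ℂ) (f g : ℂ →₀ ℂ) :
    ⟪Finsupp.linearCombination ℂ w f, Finsupp.linearCombination ℂ w g⟫_ℂ
      = ⟪Finsupp.linearCombination ℂ v f, Finsupp.linearCombination ℂ v g⟫_ℂ := by
  classical
  simp only [Finsupp.linearCombination_apply, Finsupp.sum, sum_inner, inner_sum,
    inner_smul_left, inner_smul_right, h]

/-- existence of the displacement operator with parameter `γ`. -/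
theorem exists_displacement_operator (γ : ℂ) :
    ∃ D : lp (fun _ : ℕ => ℂ) 2 ≃ₗᵢ[ℂ] lp (fun _ : ℕ => ℂ) 2,
      ∀ β : ℂ, D (coh β)
        = Complex.exp ((γ * conj β - conj γ * β) / 2) • coh (γ + β) := by
  classical
  set V : (ℂ →₀ ℂ) →ₗ[ℂ] lp (fun _ : ℕ => ℂ) 2 := Finsupp.linearCombination ℂ coh with hV
  set W : (ℂ →₀ ℂ) →ₗ[ℂ] lp (fun _ : ℕ => ℂ) 2 :=
    Finsupp.linearCombination ℂ (wvec γ) with hW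
  have hinner : ∀ f g : ℂ →₀ ℂ, ⟪W f, W g⟫_ℂ = ⟪V f, V g⟫_ℂ :=
    inner_lc coh (wvec γ) (inner_wvec γ)
  have hker : LinearMap.ker V ≤ LinearMap.ker W := by
    intro f hf
    rw [LinearMap.mem_ker] at hf ⊢
    have h1 : ⟪W f, W f⟫_ℂ = 0 := by rw [hinner, hf, inner_zero_right]
    exact inner_self_eq_zero.mp h1
  set T₀ : ((ℂ →₀ ℂ) ⧸ LinearMap.ker V) →ₗ[ℂ] lp (fun _ : ℕ => ℂ) 2 :=
    Submodule.liftQ (LinearMap.ker V) W hker with hT₀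
  set e₁ := V.quotKerEquivRange with he₁
  set T₁ : LinearMap.range V →ₗ[ℂ] lp (fun _ : ℕ => ℂ) 2 :=
    T₀ ∘ₗ (e₁.symm : (LinearMap.range V) →ₗ[ℂ] ((ℂ →₀ ℂ) ⧸ LinearMap.ker V)) with hT₁def
  have hT₁ : ∀ f : ℂ →₀ ℂ, T₁ ⟨V f, LinearMap.mem_range_self V f⟩ = W f := by
    intro f
    have h1 : e₁ (Submodule.Quotient.mk f) = ⟨V f, LinearMap.mem_range_self V f⟩ :=
      Subtype.ext (V.quotKerEquivRange_apply_mk f)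
    have h2 : e₁.symm ⟨V f, LinearMap.mem_range_self V f⟩ = Submodule.Quotient.mk f := by
      rw [LinearEquiv.symm_apply_eq, h1]
    rw [hT₁def]
    simp only [LinearMap.comp_apply, LinearEquiv.coe_coe, h2, hT₀,
      Submodule.liftQ_apply]
  have hTi : ∀ x y : LinearMap.range V, ⟪T₁ x, T₁ y⟫_ℂ = ⟪x, y⟫_ℂ := by
    rintro ⟨x, hx⟩ ⟨y, hy⟩
    obtain ⟨f, rfl⟩ := hx
    obtain ⟨g, rfl⟩ := hy
    rw [Submodule.coe_inner]
    have hx' : (⟨V f, LinearMap.mem_range_self V f⟩ : LinearMap.range V)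
        = ⟨V f, ⟨f, rfl⟩⟩ := rfl
    rw [← hx', hT₁ f]
    have hy' : (⟨V g, LinearMap.mem_range_self V g⟩ : LinearMap.range V)
        = ⟨V g, ⟨g, rfl⟩⟩ := rfl
    rw [← hy', hT₁ g]
    exact hinner f g
  set T : LinearMap.range V →ₗᵢ[ℂ] lp (fun _ : ℕ => ℂ) 2 := T₁.isometryOfInner hTi with hT
  have hrangeV : LinearMap.range V = Submodule.span ℂ (Set.range coh) := by
    rw [hV, Finsupp.range_linearCombination]
  have hdenseV : Dense ((LinearMap.range V : Set (lp (fun _ : ℕ => ℂ) 2))) := by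
    rw [hrangeV]
    exact Submodule.dense_iff_topologicalClosure_eq_top.mpr dense_span_coh
  have hd : DenseRange ((LinearMap.range V).subtypeL) := by
    show Dense (Set.range _)
    have : Set.range ((LinearMap.range V).subtypeL)
        = ((LinearMap.range V : Set (lp (fun _ : ℕ => ℂ) 2))) := Subtype.range_coe
    rw [this]; exact hdenseV
  have he : IsUniformInducing ((LinearMap.range V).subtypeL) :=
    isometry_subtype_coe.isUniformInducing
  set D₀ := ContinuousLinearMap.extend T.toContinuousLinearMap
    (LinearMap.range V).subtypeL with hD₀def
  have hD₀ : ∀ y : LinearMap.range V, D₀ ↑y = T y := fun y =>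
    ContinuousLinearMap.extend_eq T.toContinuousLinearMap hd he y
  have hnorm : ∀ x : lp (fun _ : ℕ => ℂ) 2, ‖D₀ x‖ = ‖x‖ := by
    intro x
    refine hd.induction_on x (isClosed_eq D₀.continuous.norm continuous_norm) fun a => ?_
    show ‖D₀ ↑a‖ = ‖(a : lp (fun _ : ℕ => ℂ) 2)‖
    rw [hD₀ a, T.norm_map]
    rfl
  set D₁ : lp (fun _ : ℕ => ℂ) 2 →ₗᵢ[ℂ] lp (fun _ : ℕ => ℂ) 2 :=
    { toLinearMap := (D₀ : lp (fun _ : ℕ => ℂ) 2 →ₗ[ℂ] lp (fun _ : ℕ => ℂ) 2),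
      norm_map' := hnorm } with hD₁def
  have hcoh : ∀ β : ℂ, D₁ (coh β) = wvec γ β := by
    intro β
    have h1 : coh β = V (Finsupp.single β 1) := by
      rw [hV, Finsupp.linearCombination_single, one_smul]
    have h2 : D₁ (coh β) = D₀ (coh β) := rfl
    rw [h2, h1]
    have h3 : D₀ (V (Finsupp.single β 1))
        = T ⟨V (Finsupp.single β 1), LinearMap.mem_range_self V _⟩ :=
      hD₀ ⟨V (Finsupp.single β 1), LinearMap.mem_range_self V _⟩
    have h4 : T ⟨V (Finsupp.single β 1), LinearMap.mem_range_self V _⟩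
        = T₁ ⟨V (Finsupp.single β 1), LinearMap.mem_range_self V _⟩ := by
      rw [hT]
      exact congrFun (T₁.coe_isometryOfInner hTi) _
    rw [h3, h4, hT₁, hW, Finsupp.linearCombination_single, one_smul]
  have hsurj : Function.Surjective D₁ := by
    have hclosed : IsClosed (Set.range D₁) :=
      D₁.isometry.isClosedEmbedding.isClosed_range
    have hsub' : Submodule.span ℂ (Set.range coh) ≤ LinearMap.range D₁.toLinearMap := by
      rw [Submodule.span_le]
      rintro _ ⟨δ, rfl⟩
      refine ⟨(phase γ (δ - γ))⁻¹ • coh (δ - γ), ?_⟩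
      have h4 : D₁.toLinearMap ((phase γ (δ - γ))⁻¹ • coh (δ - γ))
          = (phase γ (δ - γ))⁻¹ • D₁ (coh (δ - γ)) := by
        simp only [map_smul]
        rfl
      rw [h4, hcoh, wvec, smul_smul,
        inv_mul_cancel₀ (by rw [phase]; exact Complex.exp_ne_zero _), one_smul]
      congr 1
      ring
    have hsub : (Submodule.span ℂ (Set.range coh) : Set (lp (fun _ : ℕ => ℂ) 2))
        ⊆ Set.range ⇑D₁ := by
      intro u hu
      obtain ⟨y, hy⟩ := hsub' hu
      exact ⟨y, hy⟩
    have hdense2 : Dense (Set.range ⇑D₁) :=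
      (Submodule.dense_iff_topologicalClosure_eq_top.mpr dense_span_coh).mono hsub
    intro y
    have : Set.range ⇑D₁ = Set.univ := hclosed.closure_eq ▸ hdense2.closure_eq
    exact Set.range_eq_univ.mp this y
  refine ⟨LinearIsometryEquiv.ofSurjective D₁ hsurj, fun β => ?_⟩
  have := LinearIsometryEquiv.coe_ofSurjective D₁ hsurj
  rw [show (LinearIsometryEquiv.ofSurjective D₁ hsurj) (coh β) = D₁ (coh β) from
    congrFun this (coh β), hcoh β]
  rfl
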